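/- arXiv:1612.04960 — 2 statements merged into one kernel-verified Lean document; each statement's English description precedes it below -/
import Mathlib

section
/- The pair (α_n, β_n) with α_0 = 1, α_n = (−1)^n q^{3n²/2}(q^{−n/2} + q^{n/2}) for n ≥ 1, and β_n = 1/(q;q)_n, is a Bailey pair with parameters (1, q). -/
/- The Bailey pair with `α₀ = 1`,
`αₙ = (−1)ⁿ q^{3n²/2}(q^{−n/2} + q^{n/2})` for `n ≥ 1` (the half-integer
exponents combine to the integers `n(3n−1)/2` and `n(3n+1)/2`), and
`βₙ = 1/(q;q)ₙ`, with parameters `(1, q)`. -/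

noncomputable section

/-- The variable `q`, as a rational function over ℚ. -/
def q : RatFunc ℚ := RatFunc.X

/-- Finite q-Pochhammer symbol `(a;x)_n`. -/
def poch (a x : RatFunc ℚ) (n : ℕ) : RatFunc ℚ :=
  ∏ j ∈ Finset.range n, (1 - a * x ^ j)

/-- `(α, β)` is a Bailey pair with parameters `(a, x)`. -/
def IsBaileyPair (a x : RatFunc ℚ) (α β : ℕ → RatFunc ℚ) : Prop :=
  ∀ n, β n = ∑ r ∈ Finset.range (n + 1),
    α r / (poch x x (n - r) * poch (a * x) x (n + r))

lemma one_sub_q_pow_ne_zero {k : ℕ} (hk : 1 ≤ k) : (1 : RatFunc ℚ) - q ^ k ≠ 0 := by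
  intro h
  have hq : (q : RatFunc ℚ) ^ k = 1 := by linear_combination -h
  have h2 : (Polynomial.X : Polynomial ℚ) ^ k = 1 := by
    apply RatFunc.algebraMap_injective ℚ
    simpa [map_pow, RatFunc.algebraMap_X, q] using hq
  have := congrArg Polynomial.natDegree h2
  simp [Polynomial.natDegree_X_pow] at this
  omega

/-- `Pq n = (q;q)_n`. -/
def Pq (n : ℕ) : RatFunc ℚ := poch q q n

lemma Pq_zero : Pq 0 = 1 := by simp [Pq, poch]

lemma Pq_succ (n : ℕ) : Pq (n + 1) = Pq n * (1 - q ^ (n + 1)) := by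
  simp only [Pq, poch, Finset.prod_range_succ, pow_succ']

lemma Pq_ne_zero (n : ℕ) : Pq n ≠ 0 := by
  induction n with
  | zero => simp [Pq_zero]
  | succ n ih =>
    rw [Pq_succ]
    exact mul_ne_zero ih (one_sub_q_pow_ne_zero (by omega))

/-- The summand of the Bailey pair sum. -/
def uu (n r : ℕ) : RatFunc ℚ :=
  (if r = 0 then 1 else (-1) ^ r * (q ^ (r * (3 * r - 1) / 2) + q ^ (r * (3 * r + 1) / 2))) /
    (Pq (n - r) * Pq (n + r))

/-- The telescoping certificate. -/
def Vt (m r : ℕ) : RatFunc ℚ :=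
  if r = 0 ∨ m < r then 0
  else (-1) ^ r * q ^ (3 * ((r - 1) * r / 2)) * q ^ m /
    ((1 - q ^ m) * Pq (m - r) * Pq (m + r - 1))

/-- Abstract field identity underlying the middle telescoping step. -/
lemma alg_mid (D B E p1 p2 S : RatFunc ℚ) (hE : 1 - E ≠ 0) (hA : 1 - E * B ≠ 0)
    (hF : 1 - E * B * B ≠ 0) (hp1 : p1 ≠ 0) (hp2 : p2 ≠ 0) :
    S * (D * B + D * B * B) / (p1 * (1 - E) * (p2 * (1 - E * B * B))) -
      (1 - E * B)⁻¹ * (S * (D * B + D * B * B) / (p1 * p2)) =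
    S * D * (E * B) / ((1 - E * B) * (p1 * (1 - E)) * p2) -
      S * -1 * (D * B * B * B) * (E * B) / ((1 - E * B) * p1 * (p2 * (1 - E * B * B))) := by
  have h1 : p1 * (1 - E) * (p2 * (1 - E * B * B)) ≠ 0 :=
    mul_ne_zero (mul_ne_zero hp1 hE) (mul_ne_zero hp2 hF)
  have h2 : (1 - E * B) * (p1 * (1 - E)) * p2 ≠ 0 :=
    mul_ne_zero (mul_ne_zero hA (mul_ne_zero hp1 hE)) hp2
  have h3 : (1 - E * B) * p1 * (p2 * (1 - E * B * B)) ≠ 0 :=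
    mul_ne_zero (mul_ne_zero hA hp1) (mul_ne_zero hp2 hF)
  have h4 : p1 * p2 * (1 - E * B) ≠ 0 := mul_ne_zero (mul_ne_zero hp1 hp2) hA
  rw [inv_mul_eq_div, div_div, div_sub_div _ _ h1 h4, div_sub_div _ _ h2 h3,
    div_eq_div_iff (mul_ne_zero h1 h4) (mul_ne_zero h2 h3)]
  ring

/-- Abstract field identity underlying the top telescoping step. -/
lemma alg_top (D B p S : RatFunc ℚ) (hB : 1 - B ≠ 0) (hB2 : 1 - B * B ≠ 0) (hp : p ≠ 0) :
    S * (D * B + D * B * B) / (1 * (p * (1 - B * B))) = S * D * B / ((1 - B) * 1 * p) - 0 := by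
  rw [sub_zero, div_eq_div_iff (by simpa using mul_ne_zero hp hB2)
    (by simpa using mul_ne_zero hB hp)]
  ring

/-- Telescoping, `r = 0` case. -/
lemma tele_zero (j : ℕ) :
    uu (j + 1) 0 - (1 - q ^ (j + 1))⁻¹ * uu j 0 = Vt (j + 1) 0 - Vt (j + 1) 1 := by
  have hA : (1 : RatFunc ℚ) - q ^ (j + 1) ≠ 0 := one_sub_q_pow_ne_zero (by omega)
  have hp : Pq j ≠ 0 := Pq_ne_zero j
  simp only [uu, Vt, if_pos rfl, if_neg (by omega : ¬(1 = 0 ∨ j + 1 < 1))]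
  simp only [Nat.sub_self, Nat.add_sub_cancel, Nat.sub_zero, Nat.add_zero, Pq_succ, Pq_zero,
    true_or, if_true]
  field_simp
  ring

/-- Telescoping, `r = m` case. -/
lemma tele_top (i : ℕ) :
    uu (i + 1) (i + 1) = Vt (i + 1) (i + 1) - Vt (i + 1) (i + 2) := by
  have hp : Pq (2 * i + 1) ≠ 0 := Pq_ne_zero _
  simp only [uu, Vt, if_neg (by omega : ¬(i + 1 = 0)),
    if_neg (by omega : ¬(i + 1 = 0 ∨ i + 1 < i + 1)),
    if_pos (by omega : i + 2 = 0 ∨ i + 1 < i + 2)]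
  have e1 : i + 1 - (i + 1) = 0 := by omega
  have e3 : i + 1 + (i + 1) - 1 = 2 * i + 1 := by omega
  have e2 : i + 1 + (i + 1) = (2 * i + 1) + 1 := by omega
  rw [e1, e3, e2, Pq_zero, Pq_succ]
  obtain ⟨t, ht⟩ : ∃ t, i * (i + 1) = t + t := (Nat.even_mul_succ_self i)
  have ha : (i + 1) * (3 * (i + 1) - 1) = 3 * (t + t) + 2 * (i + 1) := by
    rw [show 3 * (i + 1) - 1 = 3 * i + 2 from by omega, ← ht]; ring
  have hb : (i + 1 - 1) * (i + 1) = t + t := by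
    rw [show i + 1 - 1 = i from rfl, ht]
  have hc : (i + 1) * (3 * (i + 1) + 1) = 3 * (t + t) + 2 * (i + 1) + (i + 1) + (i + 1) := by
    rw [← ht]; ring
  have P1 : (q : RatFunc ℚ) ^ ((i + 1) * (3 * (i + 1) - 1) / 2) =
      q ^ (3 * ((i + 1 - 1) * (i + 1) / 2)) * q ^ (i + 1) := by
    rw [← pow_add]; congr 1; omega
  have P2 : (q : RatFunc ℚ) ^ ((i + 1) * (3 * (i + 1) + 1) / 2) =
      q ^ (3 * ((i + 1 - 1) * (i + 1) / 2)) * q ^ (i + 1) * q ^ (i + 1) := by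
    rw [← pow_add, ← pow_add]; congr 1; omega
  have P3 : (q : RatFunc ℚ) ^ (2 * i + 1 + 1) = q ^ (i + 1) * q ^ (i + 1) := by
    rw [← pow_add]; congr 1; omega
  have hB : (1 : RatFunc ℚ) - q ^ (i + 1) ≠ 0 := one_sub_q_pow_ne_zero (by omega)
  have hB2 : (1 : RatFunc ℚ) - q ^ (i + 1) * q ^ (i + 1) ≠ 0 := by
    rw [← P3]; exact one_sub_q_pow_ne_zero (by omega)
  rw [P1, P2, P3]
  exact alg_top _ _ _ _ hB hB2 hp

/-- Telescoping, middle case: `r = i + 1`, `m = i + j + 2`. -/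
lemma tele_mid (i j : ℕ) :
    uu (i + j + 2) (i + 1) - (1 - q ^ (i + j + 2))⁻¹ * uu (i + j + 1) (i + 1) =
      Vt (i + j + 2) (i + 1) - Vt (i + j + 2) (i + 2) := by
  have hp1 : Pq j ≠ 0 := Pq_ne_zero j
  have hp2 : Pq (2 * i + j + 2) ≠ 0 := Pq_ne_zero _
  simp only [uu, Vt, if_neg (by omega : ¬(i + 1 = 0)),
    if_neg (by omega : ¬(i + 1 = 0 ∨ i + j + 2 < i + 1)),
    if_neg (by omega : ¬(i + 2 = 0 ∨ i + j + 2 < i + 2))]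
  have e1 : i + j + 2 - (i + 1) = j + 1 := by omega
  have e5 : i + j + 2 + (i + 1) - 1 = 2 * i + j + 2 := by omega
  have e2 : i + j + 2 + (i + 1) = (2 * i + j + 2) + 1 := by omega
  have e3 : i + j + 1 - (i + 1) = j := by omega
  have e4 : i + j + 1 + (i + 1) = 2 * i + j + 2 := by omega
  have e6 : i + j + 2 - (i + 2) = j := by omega
  have e7 : i + j + 2 + (i + 2) - 1 = (2 * i + j + 2) + 1 := by omega
  rw [e1, e5, e2, e3, e4, e6, e7, Pq_succ (2 * i + j + 2), Pq_succ j]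
  obtain ⟨t, ht⟩ : ∃ t, i * (i + 1) = t + t := (Nat.even_mul_succ_self i)
  have ha : (i + 1) * (3 * (i + 1) - 1) = 3 * (t + t) + 2 * (i + 1) := by
    rw [show 3 * (i + 1) - 1 = 3 * i + 2 from by omega, ← ht]; ring
  have hb : (i + 1 - 1) * (i + 1) = t + t := by
    rw [show i + 1 - 1 = i from rfl, ht]
  have hc : (i + 1) * (3 * (i + 1) + 1) = 3 * (t + t) + 2 * (i + 1) + (i + 1) + (i + 1) := by
    rw [← ht]; ring
  have hd : (i + 2 - 1) * (i + 2) = (t + t) + 2 * (i + 1) := by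
    rw [show i + 2 - 1 = i + 1 from rfl, ← ht]; ring
  have P1 : (q : RatFunc ℚ) ^ ((i + 1) * (3 * (i + 1) - 1) / 2) =
      q ^ (3 * ((i + 1 - 1) * (i + 1) / 2)) * q ^ (i + 1) := by
    rw [← pow_add]; congr 1; omega
  have P2 : (q : RatFunc ℚ) ^ ((i + 1) * (3 * (i + 1) + 1) / 2) =
      q ^ (3 * ((i + 1 - 1) * (i + 1) / 2)) * q ^ (i + 1) * q ^ (i + 1) := by
    rw [← pow_add, ← pow_add]; congr 1; omega
  have P3 : (q : RatFunc ℚ) ^ (3 * ((i + 2 - 1) * (i + 2) / 2)) =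
      q ^ (3 * ((i + 1 - 1) * (i + 1) / 2)) * q ^ (i + 1) * q ^ (i + 1) * q ^ (i + 1) := by
    rw [← pow_add, ← pow_add, ← pow_add]; congr 1; omega
  have P4 : (q : RatFunc ℚ) ^ (i + j + 2) = q ^ (j + 1) * q ^ (i + 1) := by
    rw [← pow_add]; congr 1; omega
  have P5 : (q : RatFunc ℚ) ^ (2 * i + j + 2 + 1) =
      q ^ (j + 1) * q ^ (i + 1) * q ^ (i + 1) := by
    rw [← pow_add, ← pow_add]; congr 1; omega
  have P6 : ((-1 : RatFunc ℚ)) ^ (i + 2) = (-1) ^ (i + 1) * -1 := by rw [pow_succ]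
  have hE : (1 : RatFunc ℚ) - q ^ (j + 1) ≠ 0 := one_sub_q_pow_ne_zero (by omega)
  have hA : (1 : RatFunc ℚ) - q ^ (j + 1) * q ^ (i + 1) ≠ 0 := by
    rw [← P4]; exact one_sub_q_pow_ne_zero (by omega)
  have hF : (1 : RatFunc ℚ) - q ^ (j + 1) * q ^ (i + 1) * q ^ (i + 1) ≠ 0 := by
    rw [← P5]; exact one_sub_q_pow_ne_zero (by omega)
  rw [P1, P2, P3, P4, P5, P6]
  exact alg_mid _ _ _ _ _ _ hE hA hF hp1 hp2

/-- The key identity: the Bailey pair sum equals `1/(q;q)_n`. -/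
lemma key (n : ℕ) : ∑ r ∈ Finset.range (n + 1), uu n r = (Pq n)⁻¹ := by
  induction n with
  | zero => simp [uu, Pq_zero]
  | succ n ih =>
    have hA : (1 : RatFunc ℚ) - q ^ (n + 1) ≠ 0 := one_sub_q_pow_ne_zero (by omega)
    have tele : ∀ r ∈ Finset.range (n + 2),
        uu (n + 1) r - (if r < n + 1 then (1 - q ^ (n + 1))⁻¹ * uu n r else 0) =
          Vt (n + 1) r - Vt (n + 1) (r + 1) := by
      intro r hr
      rw [Finset.mem_range] at hr
      rcases Nat.eq_zero_or_pos r with h0 | hpos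
      · subst h0
        rw [if_pos (by omega)]
        exact tele_zero n
      · rcases Nat.lt_or_ge r (n + 1) with hlt | hge
        · obtain ⟨i, rfl⟩ : ∃ i, r = i + 1 := ⟨r - 1, by omega⟩
          obtain ⟨j, rfl⟩ : ∃ j, n = i + j + 1 := ⟨n - i - 1, by omega⟩
          rw [if_pos (by omega)]
          exact tele_mid i j
        · have : r = n + 1 := by omega
          subst this
          rw [if_neg (by omega), sub_zero]
          exact tele_top n
    have hsum0 : ∑ r ∈ Finset.range (n + 2),
        (uu (n + 1) r - (if r < n + 1 then (1 - q ^ (n + 1))⁻¹ * uu n r else 0)) = 0 := by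
      rw [Finset.sum_congr rfl tele, Finset.sum_range_sub' (f := fun r => Vt (n + 1) r)]
      simp [Vt]
    rw [Finset.sum_sub_distrib, sub_eq_zero] at hsum0
    rw [hsum0, Finset.sum_range_succ, if_neg (by omega), add_zero,
      Finset.sum_congr rfl (fun r hr => if_pos (Finset.mem_range.mp hr)),
      ← Finset.mul_sum, ih, Pq_succ, mul_inv]
    ring

theorem bailey_pair_BP2 :
    IsBaileyPair 1 q
      (fun n => if n = 0 then 1 else
        (-1) ^ n * (q ^ (n * (3 * n - 1) / 2) + q ^ (n * (3 * n + 1) / 2)))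
      (fun n => (poch q q n)⁻¹) := by
  intro n
  simp only [one_mul]
  exact (key n).symm

end
end

section
/- For integers k ≥ i ≥ 2 and all m, n ≥ 0, F_{k,i}(m,n) = H_{k,i−1}(m,n), where F_{k,i}(m,n) counts overpartitions in O_{k,i}(m,n) whose smallest part is an overlined odd part or a non-overlined even part, and H_{k,i}(m,n) counts those whose smallest part is a non-overlined odd part or an overlined even part. -/
/- `F_{k,i}(m,n) = H_{k,i−1}(m,n)` for `k ≥ i ≥ 2` (He–Ji–Wang–Zhao,
Lemma on the sets `𝔽` and `ℍ`).  Overpartitions are modelled by pairs `(f, g)`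
of multiplicity functions (non-overlined/overlined); parts are ordered
`1̄ < 1 < 2̄ < 2 < ⋯`, so the smallest part of a nonempty overpartition has the
least occurring size `s`, and it is overlined exactly when `g s ≠ 0`. -/

noncomputable section
open scoped Classical

/-- `(f, g)` is an overpartition of `n` with exactly `m` parts. -/
def IsOverpartitionOf (m n : ℕ) (p : (ℕ →₀ ℕ) × (ℕ →₀ ℕ)) : Prop :=
  (∀ t, p.2 t ≤ 1) ∧ p.1 0 = 0 ∧ p.2 0 = 0 ∧
    p.1.sum (fun _ c => c) + p.2.sum (fun _ c => c) = m ∧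
    p.1.sum (fun t c => t * c) + p.2.sum (fun t c => t * c) = n

/-- The defining conditions of the set `O_{k,i}`. -/
def CondO (k i : ℕ) (p : (ℕ →₀ ℕ) × (ℕ →₀ ℕ)) : Prop :=
  p.2 1 + p.1 2 ≤ i - 1 ∧
  (∀ t, 1 ≤ t → p.2 (2 * t) + p.1 (2 * t) + p.2 (2 * t + 1) + p.1 (2 * t + 2) ≤ k - 1) ∧
  (∀ t, 1 ≤ p.1 (2 * t + 1) → p.1 (2 * t + 2) ≤ k - 2)

/-- `s` is the size of the smallest part of the overpartition `p`. -/
def SmallestSize (p : (ℕ →₀ ℕ) × (ℕ →₀ ℕ)) (s : ℕ) : Prop :=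
  p.1 s + p.2 s ≠ 0 ∧ ∀ t < s, p.1 t + p.2 t = 0

/-- Members of `O_{k,i}(m,n)` whose smallest part is an overlined odd part or a
non-overlined even part. -/
def Fset (k i m n : ℕ) : Set ((ℕ →₀ ℕ) × (ℕ →₀ ℕ)) :=
  {p | IsOverpartitionOf m n p ∧ CondO k i p ∧
    ∃ s, SmallestSize p s ∧ ((p.2 s ≠ 0 ∧ Odd s) ∨ (p.2 s = 0 ∧ Even s))}

/-- Members of `O_{k,i}(m,n)` whose smallest part is a non-overlined odd part or
an overlined even part. -/
def Hset (k i m n : ℕ) : Set ((ℕ →₀ ℕ) × (ℕ →₀ ℕ)) :=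
  {p | IsOverpartitionOf m n p ∧ CondO k i p ∧
    ∃ s, SmallestSize p s ∧ ((p.2 s = 0 ∧ Odd s) ∨ (p.2 s ≠ 0 ∧ Even s))}

def toggle (p : (ℕ →₀ ℕ) × (ℕ →₀ ℕ)) : (ℕ →₀ ℕ) × (ℕ →₀ ℕ) :=
  if h : ∃ t, p.1 t + p.2 t ≠ 0 then
    if p.2 (Nat.find h) = 0 then
      (p.1.update (Nat.find h) (p.1 (Nat.find h) - 1), p.2.update (Nat.find h) 1)
    else (p.1.update (Nat.find h) (p.1 (Nat.find h) + 1), p.2.update (Nat.find h) 0)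
  else p

lemma upd_apply (f : ℕ →₀ ℕ) (s v t : ℕ) : f.update s v t = if t = s then v else f t := by
  rw [Finsupp.coe_update]; exact Function.update_apply ..

lemma find_eq {p : (ℕ →₀ ℕ) × (ℕ →₀ ℕ)} {s : ℕ} (hs : SmallestSize p s) :
    ∃ h : (∃ t, p.1 t + p.2 t ≠ 0), Nat.find h = s := by
  refine ⟨⟨s, hs.1⟩, ?_⟩
  rw [Nat.find_eq_iff]
  exact ⟨hs.1, fun t ht h => h (hs.2 t ht)⟩

lemma toggle_of_eq {p : (ℕ →₀ ℕ) × (ℕ →₀ ℕ)} {s : ℕ} (hs : SmallestSize p s)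
    (hg : p.2 s = 0) : toggle p = (p.1.update s (p.1 s - 1), p.2.update s 1) := by
  obtain ⟨h, hf⟩ := find_eq hs
  rw [toggle, dif_pos h, hf, if_pos hg]

lemma toggle_of_ne {p : (ℕ →₀ ℕ) × (ℕ →₀ ℕ)} {s : ℕ} (hs : SmallestSize p s)
    (hg : p.2 s ≠ 0) : toggle p = (p.1.update s (p.1 s + 1), p.2.update s 0) := by
  obtain ⟨h, hf⟩ := find_eq hs
  rw [toggle, dif_pos h, hf, if_neg hg]

lemma upd_upd (f : ℕ →₀ ℕ) (s a b : ℕ) : (f.update s a).update s b = f.update s b := by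
  ext t
  simp only [upd_apply]
  split_ifs <;> rfl

lemma toggle_core {m n : ℕ} {p : (ℕ →₀ ℕ) × (ℕ →₀ ℕ)} {s : ℕ}
    (hop : IsOverpartitionOf m n p) (hs : SmallestSize p s) :
    IsOverpartitionOf m n (toggle p) ∧ SmallestSize (toggle p) s ∧ toggle (toggle p) = p := by
  obtain ⟨hb, h10, h20, hm, hn⟩ := hop
  have hs0 : s ≠ 0 := by rintro rfl; exact hs.1 (by rw [h10, h20])
  have h0s : (0 : ℕ) ≠ s := Ne.symm hs0
  by_cases hg : p.2 s = 0
  · have hf1 : 1 ≤ p.1 s := by have := hs.1; omega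
    rw [toggle_of_eq hs hg]
    have e1 := Finsupp.sum_update_add p.1 s (p.1 s - 1) (fun _ c => c) (fun _ => rfl)
      (fun _ _ _ => rfl)
    have e2 := Finsupp.sum_update_add p.2 s 1 (fun _ c => c) (fun _ => rfl) (fun _ _ _ => rfl)
    have e3 := Finsupp.sum_update_add p.1 s (p.1 s - 1) (fun t c => t * c)
      (fun t => mul_zero t) (fun t a b => mul_add t a b)
    have e4 := Finsupp.sum_update_add p.2 s 1 (fun t c => t * c)
      (fun t => mul_zero t) (fun t a b => mul_add t a b)
    rw [hg] at e2 e4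
    have hx : s * (p.1 s - 1) + s * 1 = s * p.1 s := by
      rw [← Nat.mul_add]; congr 1; omega
    have hsm : SmallestSize (p.1.update s (p.1 s - 1), p.2.update s 1) s := by
      constructor
      · simp [upd_apply] <;> omega
      · intro t ht
        simp only [upd_apply, if_neg (Nat.ne_of_lt ht)]
        exact hs.2 t ht
    refine ⟨⟨?_, ?_, ?_, ?_, ?_⟩, hsm, ?_⟩
    · intro t; simp only [upd_apply]; split_ifs with h
      · exact le_rfl
      · exact hb t
    · simp only [upd_apply, if_neg h0s]; exact h10
    · simp only [upd_apply, if_neg h0s]; exact h20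
    · show ((p.1.update s (p.1 s - 1)).sum fun _ c => c) +
          ((p.2.update s 1).sum fun _ c => c) = m
      omega
    · show ((p.1.update s (p.1 s - 1)).sum fun t c => t * c) +
          ((p.2.update s 1).sum fun t c => t * c) = n
      omega
    · have hq2 : (p.1.update s (p.1 s - 1), p.2.update s 1).2 s ≠ 0 := by
        simp [upd_apply]
      rw [toggle_of_ne hsm hq2]
      show ((p.1.update s (p.1 s - 1)).update s ((p.1.update s (p.1 s - 1)) s + 1),
          (p.2.update s 1).update s 0) = p
      rw [upd_apply, if_pos rfl, upd_upd, upd_upd]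
      have hv : p.1 s - 1 + 1 = p.1 s := by omega
      rw [hv, Finsupp.update_self, ← hg, Finsupp.update_self]
  · have hg1 : p.2 s = 1 := le_antisymm (hb s) (Nat.one_le_iff_ne_zero.2 hg)
    rw [toggle_of_ne hs hg]
    have e1 := Finsupp.sum_update_add p.1 s (p.1 s + 1) (fun _ c => c) (fun _ => rfl)
      (fun _ _ _ => rfl)
    have e2 := Finsupp.sum_update_add p.2 s 0 (fun _ c => c) (fun _ => rfl) (fun _ _ _ => rfl)
    have e3 := Finsupp.sum_update_add p.1 s (p.1 s + 1) (fun t c => t * c)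
      (fun t => mul_zero t) (fun t a b => mul_add t a b)
    have e4 := Finsupp.sum_update_add p.2 s 0 (fun t c => t * c)
      (fun t => mul_zero t) (fun t a b => mul_add t a b)
    rw [hg1] at e2 e4
    have hx : s * (p.1 s + 1) = s * p.1 s + s * 1 := by rw [← Nat.mul_add]
    have hsm : SmallestSize (p.1.update s (p.1 s + 1), p.2.update s 0) s := by
      constructor
      · simp [upd_apply] <;> omega
      · intro t ht
        simp only [upd_apply, if_neg (Nat.ne_of_lt ht)]
        exact hs.2 t ht
    refine ⟨⟨?_, ?_, ?_, ?_, ?_⟩, hsm, ?_⟩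
    · intro t; simp only [upd_apply]; split_ifs with h
      · exact Nat.zero_le 1
      · exact hb t
    · simp only [upd_apply, if_neg h0s]; exact h10
    · simp only [upd_apply, if_neg h0s]; exact h20
    · show ((p.1.update s (p.1 s + 1)).sum fun _ c => c) +
          ((p.2.update s 0).sum fun _ c => c) = m
      omega
    · show ((p.1.update s (p.1 s + 1)).sum fun t c => t * c) +
          ((p.2.update s 0).sum fun t c => t * c) = n
      omega
    · have hq2 : (p.1.update s (p.1 s + 1), p.2.update s 0).2 s = 0 := by
        simp [upd_apply]
      rw [toggle_of_eq hsm hq2]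
      show ((p.1.update s (p.1 s + 1)).update s ((p.1.update s (p.1 s + 1)) s - 1),
          (p.2.update s 0).update s 1) = p
      rw [upd_apply, if_pos rfl, upd_upd, upd_upd]
      have hv : p.1 s + 1 - 1 = p.1 s := by omega
      rw [hv, Finsupp.update_self, ← hg1, Finsupp.update_self]

lemma toggle_mem_H {k i m n : ℕ} (hi : 2 ≤ i) (hik : i ≤ k) {p : (ℕ →₀ ℕ) × (ℕ →₀ ℕ)}
    (hp : p ∈ Fset k i m n) : toggle p ∈ Hset k (i - 1) m n := by
  obtain ⟨hop, hcond, s, hs, hcase⟩ := hp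
  obtain ⟨core1, core2, -⟩ := toggle_core hop hs
  have hb := hop.1
  have hs0 : s ≠ 0 := by
    rintro rfl; exact hs.1 (by rw [hop.2.1, hop.2.2.1])
  have hz1 : ∀ t < s, p.1 t = 0 := fun t ht => by have := hs.2 t ht; omega
  have hz2 : ∀ t < s, p.2 t = 0 := fun t ht => by have := hs.2 t ht; omega
  have hk : 2 ≤ k := hi.trans hik
  rcases hcase with ⟨hg, hodd⟩ | ⟨hg, heven⟩
  · have hso : s % 2 = 1 := Nat.odd_iff.mp hodd
    have hg1 : p.2 s = 1 := le_antisymm (hb s) (Nat.one_le_iff_ne_zero.2 hg)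
    rw [toggle_of_ne hs hg] at core1 core2 ⊢
    refine ⟨core1, ⟨?_, ?_, ?_⟩, s, core2, Or.inl ⟨?_, hodd⟩⟩
    · simp only [upd_apply]
      have h2 : ¬(2 = s) := by omega
      simp only [if_neg h2]
      by_cases h1 : (1 : ℕ) = s
      · simp only [if_pos h1]
        rw [← h1] at hg1
        have := hcond.1
        omega
      · simp only [if_neg h1]
        have e1 : p.2 1 = 0 := hz2 1 (by omega)
        have e2 : p.1 2 = 0 := hz1 2 (by omega)
        omega
    · intro t ht
      have hc := hcond.2.1 t ht
      simp only [upd_apply]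
      have hne1 : ¬(2 * t = s) := by omega
      have hne2 : ¬(2 * t + 2 = s) := by omega
      simp only [if_neg hne1, if_neg hne2]
      by_cases h3 : 2 * t + 1 = s
      · simp only [if_pos h3]; omega
      · simp only [if_neg h3]; omega
    · intro t hq
      simp only [upd_apply] at hq ⊢
      have hne2 : ¬(2 * t + 2 = s) := by omega
      simp only [if_neg hne2]
      by_cases h3 : 2 * t + 1 = s
      · rcases Nat.eq_zero_or_pos t with rfl | ht1
        · have h1 : (1 : ℕ) = s := by omega
          rw [← h1] at hg1
          have hc := hcond.1
          have : (2 : ℕ) * 0 + 2 = 2 := by norm_num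
          rw [this]
          omega
        · have hc := hcond.2.1 t ht1
          rw [h3] at hc
          omega
      · simp only [if_neg h3] at hq
        exact hcond.2.2 t hq
    · simp [upd_apply]
  · have hse : s % 2 = 0 := Nat.even_iff.mp heven
    have hf1 : 1 ≤ p.1 s := by have := hs.1; omega
    rw [toggle_of_eq hs hg] at core1 core2 ⊢
    refine ⟨core1, ⟨?_, ?_, ?_⟩, s, core2, Or.inr ⟨?_, heven⟩⟩
    · simp only [upd_apply]
      have h1 : ¬(1 = s) := by omega
      simp only [if_neg h1]
      have e1 : p.2 1 = 0 := hz2 1 (by omega)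
      by_cases h2 : (2 : ℕ) = s
      · simp only [if_pos h2]
        rw [← h2] at hf1 ⊢
        have := hcond.1
        omega
      · simp only [if_neg h2]
        have e2 : p.1 2 = 0 := hz1 2 (by omega)
        omega
    · intro t ht
      have hc := hcond.2.1 t ht
      simp only [upd_apply]
      have hne3 : ¬(2 * t + 1 = s) := by omega
      simp only [if_neg hne3]
      by_cases h4 : 2 * t = s
      · have hne5 : ¬(2 * t + 2 = s) := by omega
        simp only [if_pos h4, if_neg hne5]
        rw [h4] at hc ⊢
        omega
      · simp only [if_neg h4]
        by_cases h5 : 2 * t + 2 = s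
        · simp only [if_pos h5]
          rw [h5] at hc
          omega
        · simp only [if_neg h5]; exact hc
    · intro t hq
      simp only [upd_apply] at hq ⊢
      have hne3 : ¬(2 * t + 1 = s) := by omega
      simp only [if_neg hne3] at hq
      by_cases h5 : 2 * t + 2 = s
      · simp only [if_pos h5]
        have := hcond.2.2 t hq
        rw [h5] at this
        omega
      · simp only [if_neg h5]
        exact hcond.2.2 t hq
    · simp [upd_apply]

lemma toggle_mem_F {k i m n : ℕ} (hi : 2 ≤ i) (hik : i ≤ k) {p : (ℕ →₀ ℕ) × (ℕ →₀ ℕ)}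
    (hp : p ∈ Hset k (i - 1) m n) : toggle p ∈ Fset k i m n := by
  obtain ⟨hop, hcond, s, hs, hcase⟩ := hp
  obtain ⟨core1, core2, -⟩ := toggle_core hop hs
  have hb := hop.1
  have hs0 : s ≠ 0 := by
    rintro rfl; exact hs.1 (by rw [hop.2.1, hop.2.2.1])
  have hz1 : ∀ t < s, p.1 t = 0 := fun t ht => by have := hs.2 t ht; omega
  have hz2 : ∀ t < s, p.2 t = 0 := fun t ht => by have := hs.2 t ht; omega
  have hk : 2 ≤ k := hi.trans hik
  rcases hcase with ⟨hg, hodd⟩ | ⟨hg, heven⟩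
  · have hso : s % 2 = 1 := Nat.odd_iff.mp hodd
    have hf1 : 1 ≤ p.1 s := by have := hs.1; omega
    rw [toggle_of_eq hs hg] at core1 core2 ⊢
    refine ⟨core1, ⟨?_, ?_, ?_⟩, s, core2, Or.inl ⟨?_, hodd⟩⟩
    · simp only [upd_apply]
      have h2 : ¬(2 = s) := by omega
      simp only [if_neg h2]
      by_cases h1 : (1 : ℕ) = s
      · simp only [if_pos h1]
        have := hcond.1
        omega
      · simp only [if_neg h1]
        have e1 : p.2 1 = 0 := hz2 1 (by omega)
        have e2 : p.1 2 = 0 := hz1 2 (by omega)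
        omega
    · intro t ht
      have hc := hcond.2.1 t ht
      simp only [upd_apply]
      have hne1 : ¬(2 * t = s) := by omega
      have hne2 : ¬(2 * t + 2 = s) := by omega
      simp only [if_neg hne1, if_neg hne2]
      by_cases h3 : 2 * t + 1 = s
      · simp only [if_pos h3]
        have e1 : p.1 (2 * t) = 0 := hz1 _ (by omega)
        have e2 : p.2 (2 * t) = 0 := hz2 _ (by omega)
        have h22 := hcond.2.2 t (by rw [h3]; omega)
        omega
      · simp only [if_neg h3]; exact hc
    · intro t hq
      simp only [upd_apply] at hq ⊢
      have hne2 : ¬(2 * t + 2 = s) := by omega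
      simp only [if_neg hne2]
      by_cases h3 : 2 * t + 1 = s
      · exact hcond.2.2 t (by rw [h3]; omega)
      · simp only [if_neg h3] at hq
        exact hcond.2.2 t hq
    · simp [upd_apply]
  · have hse : s % 2 = 0 := Nat.even_iff.mp heven
    have hg1 : p.2 s = 1 := le_antisymm (hb s) (Nat.one_le_iff_ne_zero.2 hg)
    rw [toggle_of_ne hs hg] at core1 core2 ⊢
    refine ⟨core1, ⟨?_, ?_, ?_⟩, s, core2, Or.inr ⟨?_, heven⟩⟩
    · simp only [upd_apply]
      have h1 : ¬(1 = s) := by omega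
      simp only [if_neg h1]
      have e1 : p.2 1 = 0 := hz2 1 (by omega)
      by_cases h2 : (2 : ℕ) = s
      · simp only [if_pos h2]
        have hc := hcond.1
        rw [← h2]
        omega
      · simp only [if_neg h2]
        have e2 : p.1 2 = 0 := hz1 2 (by omega)
        omega
    · intro t ht
      have hc := hcond.2.1 t ht
      simp only [upd_apply]
      have hne3 : ¬(2 * t + 1 = s) := by omega
      simp only [if_neg hne3]
      by_cases h4 : 2 * t = s
      · have hne5 : ¬(2 * t + 2 = s) := by omega
        simp only [if_pos h4, if_neg hne5]
        rw [h4] at hc ⊢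
        omega
      · simp only [if_neg h4]
        by_cases h5 : 2 * t + 2 = s
        · simp only [if_pos h5]
          have e1 : p.2 (2 * t) = 0 := hz2 _ (by omega)
          have e2 : p.1 (2 * t) = 0 := hz1 _ (by omega)
          have e3 : p.2 (2 * t + 1) = 0 := hz2 _ (by omega)
          have hc2 := hcond.2.1 (t + 1) (by omega)
          have h6 : 2 * (t + 1) = s := by omega
          rw [h6] at hc2
          omega
        · simp only [if_neg h5]; exact hc
    · intro t hq
      simp only [upd_apply] at hq ⊢
      have hne3 : ¬(2 * t + 1 = s) := by omega
      simp only [if_neg hne3] at hq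
      by_cases h5 : 2 * t + 2 = s
      · have e1 : p.1 (2 * t + 1) = 0 := hz1 _ (by omega)
        omega
      · simp only [if_neg h5]
        exact hcond.2.2 t hq
    · simp [upd_apply]

theorem F_eq_H (k i m n : ℕ) (hi : 2 ≤ i) (hik : i ≤ k) :
    (Fset k i m n).ncard = (Hset k (i - 1) m n).ncard := by
  have himg : Hset k (i - 1) m n = toggle '' Fset k i m n := by
    apply Set.Subset.antisymm
    · intro q hq
      obtain ⟨hop, -, s, hs, -⟩ := id hq
      exact ⟨toggle q, toggle_mem_F hi hik hq, (toggle_core hop hs).2.2⟩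
    · rintro _ ⟨p, hp, rfl⟩
      exact toggle_mem_H hi hik hp
  rw [himg, Set.ncard_image_of_injOn]
  intro a ha b hb hab
  obtain ⟨hopa, -, sa, hsa, -⟩ := ha
  obtain ⟨hopb, -, sb, hsb, -⟩ := hb
  rw [← (toggle_core hopa hsa).2.2, ← (toggle_core hopb hsb).2.2, hab]
end
end
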